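/- The operators Θ_i := ((A+z_i-z_{i+1})(A+(1-β/2)(z_{i+1}-z_i))τ_i - A(A-z_i+z_{i+1}))/((1-β/2)(z_i-z_{i+1})(A-z_i+z_{i+1})), where τ_i swaps the variables z_i and z_{i+1}, satisfy the symmetric group Coxeter relations: Θ_i² = 1, (Θ_iΘ_{i+1})³ = 1, and Θ_iΘ_j = Θ_jΘ_i for |i-j| > 1. -/

import Mathlib

/- STATEMENT 0: The operators Θ_i satisfy the symmetric group Coxeter relations. -/

open MvPolynomial

noncomputable section

/-- The field of rational functions in variables `z_i` (i : ℕ) and `A, β` over ℚ. -/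
abbrev BrauerField : Type := FractionRing (MvPolynomial (ℕ ⊕ Fin 2) ℚ)

/-- The variable `z i`. -/
def zVar (i : ℕ) : BrauerField :=
  algebraMap (MvPolynomial (ℕ ⊕ Fin 2) ℚ) BrauerField (X (Sum.inl i))

/-- The variable `A`. -/
def Avar : BrauerField :=
  algebraMap (MvPolynomial (ℕ ⊕ Fin 2) ℚ) BrauerField (X (Sum.inr 0))

/-- The variable `β`. -/
def betaVar : BrauerField :=
  algebraMap (MvPolynomial (ℕ ⊕ Fin 2) ℚ) BrauerField (X (Sum.inr 1))

/-- `τ i`: the field automorphism exchanging the variables `z i` and `z (i+1)`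
and fixing all other generators. -/
def tau (i : ℕ) : BrauerField ≃+* BrauerField :=
  IsFractionRing.ringEquivOfRingEquiv
    (MvPolynomial.renameEquiv ℚ
      (Equiv.sumCongr (Equiv.swap i (i+1)) (Equiv.refl (Fin 2)))).toRingEquiv

/-- The operator `Θ i` acting on rational functions. -/
def Theta (i : ℕ) (p : BrauerField) : BrauerField :=
  ((Avar + zVar i - zVar (i+1)) * (Avar + (1 - betaVar/2) * (zVar (i+1) - zVar i)) * tau i p
      - Avar * (Avar - zVar i + zVar (i+1)) * p) /
    ((1 - betaVar/2) * (zVar i - zVar (i+1)) * (Avar - zVar i + zVar (i+1)))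

namespace ThetaAux

def swe (i : ℕ) : (ℕ ⊕ Fin 2) ≃ (ℕ ⊕ Fin 2) :=
  Equiv.sumCongr (Equiv.swap i (i+1)) (Equiv.refl (Fin 2))

lemma tau_algebraMap (i : ℕ) (p : MvPolynomial (ℕ ⊕ Fin 2) ℚ) :
    tau i (algebraMap _ BrauerField p) = algebraMap _ BrauerField (rename (swe i) p) :=
  IsFractionRing.ringEquivOfRingEquiv_algebraMap _ p

lemma hom_ext {f g : BrauerField →+* BrauerField}
    (h : ∀ p, f (algebraMap (MvPolynomial (ℕ ⊕ Fin 2) ℚ) BrauerField p)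
      = g (algebraMap _ BrauerField p)) : f = g :=
  IsLocalization.ringHom_ext (nonZeroDivisors _) (RingHom.ext h)

lemma tau_tau (i : ℕ) (p : BrauerField) : tau i (tau i p) = p := by
  have : (tau i).toRingHom.comp (tau i).toRingHom = RingHom.id _ := by
    apply hom_ext
    intro p
    simp only [RingHom.comp_apply, RingEquiv.toRingHom_eq_coe, RingHom.coe_coe,
      tau_algebraMap, RingHom.id_apply, rename_rename]
    congr 1
    have h : (⇑(swe i) ∘ ⇑(swe i)) = id := by
      funext x
      simp [swe, Function.comp]
    rw [h, rename_id, AlgHom.id_apply]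
  exact DFunLike.congr_fun this p


set_option maxHeartbeats 2000000 in
lemma swap_braid (i : ℕ) (a : ℕ) :
    (Equiv.swap i (i+1)) ((Equiv.swap (i+1) (i+1+1)) ((Equiv.swap i (i+1)) a))
    = (Equiv.swap (i+1) (i+1+1)) ((Equiv.swap i (i+1)) ((Equiv.swap (i+1) (i+1+1)) a)) := by
  simp only [Equiv.swap_apply_def]
  split_ifs <;> omega

set_option maxHeartbeats 2000000 in
lemma swap_comm (i j : ℕ) (h : 1 < Nat.dist i j) (a : ℕ) :
    (Equiv.swap i (i+1)) ((Equiv.swap j (j+1)) a)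
    = (Equiv.swap j (j+1)) ((Equiv.swap i (i+1)) a) := by
  simp only [Nat.dist] at h
  simp only [Equiv.swap_apply_def]
  split_ifs <;> omega

lemma swe_apply (i : ℕ) (x : ℕ ⊕ Fin 2) :
    (swe i) x = Sum.map (Equiv.swap i (i+1)) id x := by
  cases x <;> rfl

lemma tau_braid (i : ℕ) (p : BrauerField) :
    tau i (tau (i+1) (tau i p)) = tau (i+1) (tau i (tau (i+1) p)) := by
  have hfe : ⇑(swe i) ∘ ⇑(swe (i+1)) ∘ ⇑(swe i) = ⇑(swe (i+1)) ∘ ⇑(swe i) ∘ ⇑(swe (i+1)) := by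
    funext x
    simp only [Function.comp_apply, swe_apply]
    rcases x with a | b
    · simp only [Sum.map_inl]
      exact congrArg Sum.inl (swap_braid i a)
    · rfl
  have : (tau i).toRingHom.comp ((tau (i+1)).toRingHom.comp (tau i).toRingHom)
      = (tau (i+1)).toRingHom.comp ((tau i).toRingHom.comp (tau (i+1)).toRingHom) := by
    apply hom_ext
    intro p
    simp only [RingHom.comp_apply, RingEquiv.toRingHom_eq_coe, RingHom.coe_coe,
      tau_algebraMap, rename_rename]
    rw [hfe]
  exact DFunLike.congr_fun this p

lemma tau_comm (i j : ℕ) (h : 1 < Nat.dist i j) (p : BrauerField) :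
    tau i (tau j p) = tau j (tau i p) := by
  have hfe : ⇑(swe i) ∘ ⇑(swe j) = ⇑(swe j) ∘ ⇑(swe i) := by
    funext x
    simp only [Function.comp_apply, swe_apply]
    rcases x with a | b
    · simp only [Sum.map_inl]
      exact congrArg Sum.inl (swap_comm i j h a)
    · rfl
  have : (tau i).toRingHom.comp (tau j).toRingHom
      = (tau j).toRingHom.comp (tau i).toRingHom := by
    apply hom_ext
    intro p
    simp only [RingHom.comp_apply, RingEquiv.toRingHom_eq_coe, RingHom.coe_coe,
      tau_algebraMap, rename_rename]
    rw [hfe]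
  exact DFunLike.congr_fun this p

lemma tau_zVar (i j : ℕ) : tau i (zVar j) = zVar (Equiv.swap i (i+1) j) := by
  rw [zVar, tau_algebraMap, rename_X]; rfl

lemma tau_zVar_self (i : ℕ) : tau i (zVar i) = zVar (i+1) := by
  rw [tau_zVar, Equiv.swap_apply_left]

lemma tau_zVar_succ (i : ℕ) : tau i (zVar (i+1)) = zVar i := by
  rw [tau_zVar, Equiv.swap_apply_right]

lemma tau_zVar_of_ne (i j : ℕ) (h1 : j ≠ i) (h2 : j ≠ i+1) : tau i (zVar j) = zVar j := by
  rw [tau_zVar, Equiv.swap_apply_of_ne_of_ne h1 h2]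

lemma tau_Avar (i : ℕ) : tau i Avar = Avar := by
  rw [Avar, tau_algebraMap, rename_X]; rfl

lemma tau_betaVar (i : ℕ) : tau i betaVar = betaVar := by
  rw [betaVar, tau_algebraMap, rename_X]; rfl

-- nonvanishing
lemma poly_ne_zero (f : (ℕ ⊕ Fin 2) → ℚ) {p : MvPolynomial (ℕ ⊕ Fin 2) ℚ}
    (h : eval f p ≠ 0) : p ≠ 0 := fun hp => h (by simp [hp])

lemma am_ne_zero {p : MvPolynomial (ℕ ⊕ Fin 2) ℚ} (h : p ≠ 0) :
    algebraMap _ BrauerField p ≠ 0 := by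
  simpa [IsFractionRing.to_map_eq_zero_iff] using h

lemma z_sub_ne (a b : ℕ) (h : a ≠ b) : zVar a - zVar b ≠ 0 := by
  rw [zVar, zVar, ← map_sub]
  apply am_ne_zero
  apply poly_ne_zero (fun s => if s = Sum.inl a then 1 else 0)
  simp [Ne.symm h]

lemma A_add_sub_ne (a b : ℕ) : Avar + zVar a - zVar b ≠ 0 := by
  rw [Avar, zVar, zVar, ← map_add, ← map_sub]
  apply am_ne_zero
  apply poly_ne_zero (fun s => if s = Sum.inr 0 then 1 else 0)
  by_cases h : a = b <;> simp [h]

lemma A_sub_add_ne (a b : ℕ) : Avar - zVar a + zVar b ≠ 0 := by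
  have := A_add_sub_ne b a
  intro h
  apply this
  linear_combination h

lemma Avar_ne : Avar ≠ 0 := by
  rw [Avar]
  apply am_ne_zero
  apply poly_ne_zero (fun s => if s = Sum.inr 0 then 1 else 0)
  simp

lemma c_ne : (1 : BrauerField) - betaVar/2 ≠ 0 := by
  have h2 : (2 : BrauerField) = algebraMap (MvPolynomial (ℕ ⊕ Fin 2) ℚ) BrauerField 2 := by
    rw [map_ofNat]
  have key : (2 : BrauerField) - betaVar ≠ 0 := by
    rw [h2, betaVar, ← map_sub]
    apply am_ne_zero
    apply poly_ne_zero (fun _ => 0)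
    simp [map_ofNat]
  intro h
  apply key
  have h2' : (2 : BrauerField) ≠ 0 := by norm_num
  field_simp at h
  linear_combination h

end ThetaAux

namespace ThetaAux

section CoreLemmas
variable {F : Type} [Field F]

/-- main scalar identity: `a * aˢ + b² = 1`. -/
lemma amain_core (A c x y : F) (hc : c ≠ 0) (hxy : x - y ≠ 0)
    (hAxy : A - x + y ≠ 0) (hAyx : A - y + x ≠ 0) :
    (A+x-y)*(A+c*(y-x))/(c*(x-y)*(A-x+y)) * ((A+y-x)*(A+c*(x-y))/(c*(y-x)*(A-y+x))) + (-(A/(c*(x-y)))) * (-(A/(c*(x-y)))) = 1 := by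
  have hyx : y - x ≠ 0 := fun h => hxy (by linear_combination -h)
  have hd1 : c*(x-y)*(A-x+y) ≠ 0 := mul_ne_zero (mul_ne_zero hc hxy) hAxy
  have hd2 : c*(y-x)*(A-y+x) ≠ 0 := mul_ne_zero (mul_ne_zero hc hyx) hAyx
  have he : c*(x-y) ≠ 0 := mul_ne_zero hc hxy
  rw [div_mul_div_comm, neg_mul_neg, div_mul_div_comm,
    div_add_div _ _ (mul_ne_zero hd1 hd2) (mul_ne_zero he he),
    div_eq_one_iff_eq (mul_ne_zero (mul_ne_zero hd1 hd2) (mul_ne_zero he he))]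
  ring

lemma invol_core (A c x y q0 q1 : F) (hc : c ≠ 0) (hxy : x - y ≠ 0)
    (hAxy : A - x + y ≠ 0) (hAyx : A - y + x ≠ 0) :
    (A+x-y)*(A+c*(y-x))/(c*(x-y)*(A-x+y)) * (((A+y-x)*(A+c*(x-y))/(c*(y-x)*(A-y+x))) * q0 + (-(A/(c*(y-x)))) * q1)
    + (-(A/(c*(x-y)))) * (((A+x-y)*(A+c*(y-x))/(c*(x-y)*(A-x+y))) * q1 + (-(A/(c*(x-y)))) * q0) = q0 := by
  have hflip : (-(A/(c*(y-x)))) = -((-(A/(c*(x-y))))) := by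
    rw [show c*(y-x) = -(c*(x-y)) by ring, div_neg, neg_neg]
  linear_combination (amain_core A c x y hc hxy hAxy hAyx) * q0
    + (((A+x-y)*(A+c*(y-x))/(c*(x-y)*(A-x+y))) * q1) * hflip

set_option maxHeartbeats 1000000 in
lemma braid_core (A c x y w q0 q1 q2 q12 q21 q121 : F) (hc : c ≠ 0)
    (hxy : x - y ≠ 0) (hyx : y - x ≠ 0) (hxw : x - w ≠ 0) (hwx : w - x ≠ 0)
    (hyw : y - w ≠ 0) (hwy : w - y ≠ 0)
    (hAxy : A - x + y ≠ 0) (hAyx : A - y + x ≠ 0) (hAxw : A - x + w ≠ 0)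
    (hAwx : A - w + x ≠ 0) (hAyw : A - y + w ≠ 0) (hAwy : A - w + y ≠ 0) :
    (A+x-y)*(A+c*(y-x))/(c*(x-y)*(A-x+y)) * ((A+x-w)*(A+c*(w-x))/(c*(x-w)*(A-x+w)) * ((A+y-w)*(A+c*(w-y))/(c*(y-w)*(A-y+w)) * q121 + (-(A/(c*(y-w)))) * q12) + (-(A/(c*(x-w)))) * ((A+y-x)*(A+c*(x-y))/(c*(y-x)*(A-y+x)) * q0 + (-(A/(c*(y-x)))) * q1))
    + (-(A/(c*(x-y)))) * ((A+y-w)*(A+c*(w-y))/(c*(y-w)*(A-y+w)) * ((A+x-w)*(A+c*(w-x))/(c*(x-w)*(A-x+w)) * q21 + (-(A/(c*(x-w)))) * q2) + (-(A/(c*(y-w)))) * ((A+x-y)*(A+c*(y-x))/(c*(x-y)*(A-x+y)) * q1 + (-(A/(c*(x-y)))) * q0))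
    = (A+y-w)*(A+c*(w-y))/(c*(y-w)*(A-y+w)) * ((A+x-w)*(A+c*(w-x))/(c*(x-w)*(A-x+w)) * ((A+x-y)*(A+c*(y-x))/(c*(x-y)*(A-x+y)) * q121 + (-(A/(c*(x-y)))) * q21) + (-(A/(c*(x-w)))) * ((A+w-y)*(A+c*(y-w))/(c*(w-y)*(A-w+y)) * q0 + (-(A/(c*(w-y)))) * q2))
    + (-(A/(c*(y-w)))) * ((A+x-y)*(A+c*(y-x))/(c*(x-y)*(A-x+y)) * ((A+x-w)*(A+c*(w-x))/(c*(x-w)*(A-x+w)) * q12 + (-(A/(c*(x-w)))) * q1) + (-(A/(c*(x-y)))) * ((A+y-w)*(A+c*(w-y))/(c*(y-w)*(A-y+w)) * q2 + (-(A/(c*(y-w)))) * q0)) := by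
  have hm1 := amain_core A c x y hc hxy hAxy hAyx
  have hm2 := amain_core A c y w hc hyw hAyw hAwy
  have h5p : (-(A/(c*(x-w))))*(-(A/(c*(y-x)))) + (-(A/(c*(x-y))))*(-(A/(c*(y-w)))) = (-(A/(c*(y-w))))*(-(A/(c*(x-w)))) := by
    field_simp
    ring
  have h4p : (-(A/(c*(x-y))))*(-(A/(c*(x-w)))) = (-(A/(c*(x-w))))*(-(A/(c*(w-y)))) + (-(A/(c*(y-w))))*(-(A/(c*(x-y)))) := by
    field_simp
    ring
  have hsmall : (-(A/(c*(x-y))))*(-(A/(c*(x-y))))*((-(A/(c*(y-w)))) - (-(A/(c*(x-w))))) = (-(A/(c*(y-w))))*(-(A/(c*(y-w))))*((-(A/(c*(x-y)))) - (-(A/(c*(x-w))))) := by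
    field_simp
    ring
  have hq0 : (A+x-y)*(A+c*(y-x))/(c*(x-y)*(A-x+y))*(-(A/(c*(x-w))))*((A+y-x)*(A+c*(x-y))/(c*(y-x)*(A-y+x))) + (-(A/(c*(x-y))))*(-(A/(c*(y-w))))*(-(A/(c*(x-y)))) = (A+y-w)*(A+c*(w-y))/(c*(y-w)*(A-y+w))*(-(A/(c*(x-w))))*((A+w-y)*(A+c*(y-w))/(c*(w-y)*(A-w+y))) + (-(A/(c*(y-w))))*(-(A/(c*(x-y))))*(-(A/(c*(y-w)))) := by
    linear_combination (-(A/(c*(x-w)))) * hm1 - (-(A/(c*(x-w)))) * hm2 + hsmall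
  have hq1 : (A+x-y)*(A+c*(y-x))/(c*(x-y)*(A-x+y))*(-(A/(c*(x-w))))*(-(A/(c*(y-x)))) + (-(A/(c*(x-y))))*(-(A/(c*(y-w))))*(A+x-y)*(A+c*(y-x))/(c*(x-y)*(A-x+y)) = (-(A/(c*(y-w))))*(A+x-y)*(A+c*(y-x))/(c*(x-y)*(A-x+y))*(-(A/(c*(x-w)))) := by
    linear_combination ((A+x-y)*(A+c*(y-x))/(c*(x-y)*(A-x+y))) * h5p
  have hq2 : (-(A/(c*(x-y))))*(A+y-w)*(A+c*(w-y))/(c*(y-w)*(A-y+w))*(-(A/(c*(x-w)))) = (A+y-w)*(A+c*(w-y))/(c*(y-w)*(A-y+w))*(-(A/(c*(x-w))))*(-(A/(c*(w-y)))) + (-(A/(c*(y-w))))*(-(A/(c*(x-y))))*(A+y-w)*(A+c*(w-y))/(c*(y-w)*(A-y+w)) := by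
    linear_combination ((A+y-w)*(A+c*(w-y))/(c*(y-w)*(A-y+w))) * h4p
  linear_combination hq0 * q0 + hq1 * q1 + hq2 * q2

end CoreLemmas

end ThetaAux

/-- linear form of `Theta`. -/
lemma theta_apply (i : ℕ) (p : BrauerField) :
    Theta i p =
      (Avar + zVar i - zVar (i+1)) * (Avar + (1 - betaVar/2) * (zVar (i+1) - zVar i)) /
        ((1 - betaVar/2) * (zVar i - zVar (i+1)) * (Avar - zVar i + zVar (i+1))) * tau i p
      + (-(Avar / ((1 - betaVar/2) * (zVar i - zVar (i+1))))) * p := by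
  have hxy := ThetaAux.z_sub_ne i (i+1) (by omega)
  have hD : (1 - betaVar/2) * (zVar i - zVar (i+1)) * (Avar - zVar i + zVar (i+1)) ≠ 0 :=
    mul_ne_zero (mul_ne_zero ThetaAux.c_ne hxy) (ThetaAux.A_sub_add_ne i (i+1))
  have he : (1 - betaVar/2) * (zVar i - zVar (i+1)) ≠ 0 := mul_ne_zero ThetaAux.c_ne hxy
  rw [Theta, sub_div, div_mul_eq_mul_div, sub_eq_add_neg]
  congr 1
  rw [neg_mul, div_mul_eq_mul_div, neg_inj, div_eq_div_iff hD he]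
  ring

section Relations
open ThetaAux

lemma theta_invol (i : ℕ) (p : BrauerField) : Theta i (Theta i p) = p := by
  have hz2 : tau i (zVar (i+1)) = zVar i := tau_zVar_succ i
  simp only [theta_apply, map_add, map_mul, map_neg, map_div₀, map_sub, map_one, map_ofNat,
    tau_Avar, tau_betaVar, tau_zVar_self, hz2, tau_tau]
  exact invol_core Avar (1 - betaVar/2) (zVar i) (zVar (i+1)) p (tau i p)
    c_ne (z_sub_ne i (i+1) (by omega)) (A_sub_add_ne i (i+1)) (A_sub_add_ne (i+1) i)

lemma theta_braid (i : ℕ) (p : BrauerField) :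
    Theta i (Theta (i+1) (Theta i p)) = Theta (i+1) (Theta i (Theta (i+1) p)) := by
  have hz1 : tau i (zVar (i+1)) = zVar i := tau_zVar_succ i
  have hz2 : tau (i+1) (zVar (i+1+1)) = zVar (i+1) := tau_zVar_succ (i+1)
  have hz3 : tau i (zVar (i+1+1)) = zVar (i+1+1) := tau_zVar_of_ne i (i+1+1) (by omega) (by omega)
  have hz4 : tau (i+1) (zVar i) = zVar i := tau_zVar_of_ne (i+1) i (by omega) (by omega)
  simp only [theta_apply, map_add, map_mul, map_neg, map_div₀, map_sub, map_one, map_ofNat,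
    tau_Avar, tau_betaVar, tau_zVar_self, hz1, hz2, hz3, hz4, tau_tau, tau_braid]
  exact braid_core Avar (1 - betaVar/2) (zVar i) (zVar (i+1)) (zVar (i+1+1))
    p (tau i p) (tau (i+1) p) (tau i (tau (i+1) p)) (tau (i+1) (tau i p))
    (tau (i+1) (tau i (tau (i+1) p)))
    c_ne
    (z_sub_ne i (i+1) (by omega)) (z_sub_ne (i+1) i (by omega))
    (z_sub_ne i (i+1+1) (by omega)) (z_sub_ne (i+1+1) i (by omega))
    (z_sub_ne (i+1) (i+1+1) (by omega)) (z_sub_ne (i+1+1) (i+1) (by omega))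
    (A_sub_add_ne i (i+1)) (A_sub_add_ne (i+1) i)
    (A_sub_add_ne i (i+1+1)) (A_sub_add_ne (i+1+1) i)
    (A_sub_add_ne (i+1) (i+1+1)) (A_sub_add_ne (i+1+1) (i+1))

lemma theta_comm (i j : ℕ) (h : 1 < Nat.dist i j) (p : BrauerField) :
    Theta i (Theta j p) = Theta j (Theta i p) := by
  have hd : 1 < i - j + (j - i) := by simpa [Nat.dist] using h
  have hz1 : tau i (zVar j) = zVar j := tau_zVar_of_ne i j (by omega) (by omega)
  have hz2 : tau i (zVar (j+1)) = zVar (j+1) := tau_zVar_of_ne i (j+1) (by omega) (by omega)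
  have hz3 : tau j (zVar i) = zVar i := tau_zVar_of_ne j i (by omega) (by omega)
  have hz4 : tau j (zVar (i+1)) = zVar (i+1) := tau_zVar_of_ne j (i+1) (by omega) (by omega)
  simp only [theta_apply, map_add, map_mul, map_neg, map_div₀, map_sub, map_one, map_ofNat,
    tau_Avar, tau_betaVar, hz1, hz2, hz3, hz4]
  rw [tau_comm i j h p]
  ring

end Relations

/-- The `Θ_i` satisfy the symmetric group Coxeter relations:
`Θ_i² = 1`, `(Θ_i Θ_{i+1})³ = 1`, and `Θ_i Θ_j = Θ_j Θ_i` for `|i - j| > 1`. -/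
theorem theta_coxeter_relations :
    (∀ i : ℕ, Theta i ∘ Theta i = id) ∧
    (∀ i : ℕ, (Theta i ∘ Theta (i+1))^[3] = id) ∧
    (∀ i j : ℕ, 1 < Nat.dist i j → Theta i ∘ Theta j = Theta j ∘ Theta i) := by
  refine ⟨fun i => ?_, fun i => ?_, fun i j h => ?_⟩
  · funext p
    exact theta_invol i p
  · funext p
    show Theta i (Theta (i+1) (Theta i (Theta (i+1) (Theta i (Theta (i+1) p))))) = p
    rw [← theta_braid i p, theta_invol, theta_invol, theta_invol]
  · funext p
    exact theta_comm i j h p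

end
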